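/- Let w and z be Gaussian integers that are primary (≡ 1 mod 2(1+i)) and primitive (gcd of real and imaginary parts equal to 1). Define the Dirichlet symbol (z/w) := Jacobi symbol ((Re(w·z))/(|w|²)). Then the reciprocity (z/w) = (w/z) holds. -/

import Mathlib

/-- A Gaussian integer `z = r + is` is primary if `r` is odd and `s ≡ r - 1 (mod 4)`,
i.e. `z ≡ 1 (mod 2(1+i))`. -/
def GaussianInt.IsPrimary (z : GaussianInt) : Prop :=
  Odd z.re ∧ (4 : ℤ) ∣ (z.im - (z.re - 1))

private lemma aux14 {p : ℕ} (hp : p.Prime) {r s r' s' : ℤ} (hrs : Int.gcd r s = 1)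
    (hpa : (p:ℤ) ∣ r*r' - s*s') (hpN : (p:ℤ) ∣ r^2 + s^2) : (p:ℤ) ∣ r'^2 + s'^2 := by
  have hpZ : Prime (p:ℤ) := Nat.prime_iff_prime_int.mp hp
  have hps : ¬ (p:ℤ) ∣ s := by
    intro hps
    have h2 : (p:ℤ) ∣ r^2 := by
      have h := hpN.sub (dvd_pow hps two_ne_zero)
      simpa using h
    have hpr : (p:ℤ) ∣ r := hpZ.dvd_of_dvd_pow h2
    have hg : (p:ℤ) ∣ (Int.gcd r s : ℤ) := Int.dvd_coe_gcd hpr hps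
    rw [hrs] at hg
    have := Int.le_of_dvd one_pos hg
    have := hp.two_le
    omega
  have key : (p:ℤ) ∣ s^2 * (r'^2 + s'^2) := by
    obtain ⟨c, hc⟩ := hpa
    obtain ⟨d, hd⟩ := hpN
    exact ⟨r'^2*d - c*(s*s'+r*r'), by linear_combination r'^2*hd - (s*s'+r*r')*hc⟩
  rcases hpZ.dvd_mul.mp key with h | h
  · exact absurd (hpZ.dvd_of_dvd_pow h) hps
  · exact h

/-- Reciprocity for the Dirichlet symbol `(z/w) := (Re(wz) / |w|²)` (Jacobi symbol):
for `w, z` primary and primitive, `(z/w) = (w/z)`. -/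
theorem stmt14 (w z : GaussianInt)
    (hw : GaussianInt.IsPrimary w) (hz : GaussianInt.IsPrimary z)
    (hwprim : Int.gcd w.re w.im = 1) (hzprim : Int.gcd z.re z.im = 1) :
    jacobiSym ((w * z).re) (w.norm.natAbs) = jacobiSym ((z * w).re) (z.norm.natAbs) := by
  obtain ⟨hr, hs4⟩ := hw
  obtain ⟨hr', hs4'⟩ := hz
  rw [mul_comm z w]
  set r := w.re with hrdef
  set s := w.im with hsdef
  set r' := z.re with hr'def
  set s' := z.im with hs'def
  set a : ℤ := (w*z).re with ha
  set b : ℤ := (w*z).im with hb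
  have hare : a = r*r' - s*s' := by
    rw [ha, Zsqrtd.re_mul]; ring
  have hbim : b = r*s' + s*r' := by
    rw [hb, Zsqrtd.im_mul]
  set N := w.norm.natAbs with hN
  set M := z.norm.natAbs with hM
  have hNZ : (N:ℤ) = r^2 + s^2 := by
    rw [hN, Int.natAbs_of_nonneg (by rw [Zsqrtd.norm_def]; nlinarith [sq_nonneg r, sq_nonneg s])]
    rw [Zsqrtd.norm_def]; ring
  have hMZ : (M:ℤ) = r'^2 + s'^2 := by
    rw [hM, Int.natAbs_of_nonneg (by rw [Zsqrtd.norm_def]; nlinarith [sq_nonneg r', sq_nonneg s'])]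
    rw [Zsqrtd.norm_def]; ring
  -- parity data
  obtain ⟨k, hk⟩ := hr
  obtain ⟨t, ht⟩ := hs4
  obtain ⟨k', hk'⟩ := hr'
  obtain ⟨t', ht'⟩ := hs4'
  have hsval : s = 2*(2*t + k) := by omega
  have hs'val : s' = 2*(2*t' + k') := by omega
  have hN4 : N % 4 = 1 := by
    have e : (N:ℤ) = 4*(k*k + k + (2*t+k)*(2*t+k)) + 1 := by
      rw [hNZ, hk, hsval]; ring
    omega
  have hM4 : M % 4 = 1 := by
    have e : (M:ℤ) = 4*(k'*k' + k' + (2*t'+k')*(2*t'+k')) + 1 := by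
      rw [hMZ, hk', hs'val]; ring
    omega
  have hN0 : N ≠ 0 := by omega
  have hM0 : M ≠ 0 := by omega
  have hNModd : Odd (N*M) := (Nat.odd_iff.mpr (by omega)).mul (Nat.odd_iff.mpr (by omega))
  have hNM4 : (N*M) % 4 = 1 := by rw [Nat.mul_mod, hN4, hM4]
  have haodd : Odd a := by
    rw [hare]
    exact ((Int.odd_iff.mpr (by omega)).mul (Int.odd_iff.mpr (by omega))).sub_even
      ((Int.even_iff.mpr (by omega)).mul_right s')
  have ha0 : a ≠ 0 := by
    have := Int.odd_iff.mp haodd; omega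
  have hsum : a^2 + b^2 = (N:ℤ)*(M:ℤ) := by
    rw [hare, hbim, hNZ, hMZ]; ring
  by_cases hco : Int.gcd a ((N*M : ℕ) : ℤ) = 1
  · -- coprime case: both symbols ±1 and their product is 1
    have hcoN : Int.gcd a (N:ℤ) = 1 := by
      have h1 : Nat.gcd a.natAbs (N*M) = 1 := by simpa [Int.gcd, Int.natAbs_mul] using hco
      have := Nat.Coprime.coprime_dvd_right (Dvd.intro M rfl) h1
      simpa [Int.gcd] using this
    have hcoM : Int.gcd a (M:ℤ) = 1 := by
      have h1 : Nat.gcd a.natAbs (N*M) = 1 := by simpa [Int.gcd, Int.natAbs_mul] using hco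
      have := Nat.Coprime.coprime_dvd_right (Dvd.intro_left N rfl) h1
      simpa [Int.gcd] using this
    have hcoab : Int.gcd a b = 1 := by
      by_contra hg
      have hgne : Int.gcd a b ≠ 0 := fun h => ha0 (Int.gcd_eq_zero_iff.mp h).1
      set g := Int.gcd a b with hgdef
      have hdvd : (g:ℤ) ∣ (Int.gcd a ((N*M:ℕ):ℤ) : ℤ) := by
        apply Int.dvd_coe_gcd (Int.gcd_dvd_left a b)
        have h1 : (g:ℤ) ∣ a^2 + b^2 :=
          dvd_add ((Int.gcd_dvd_left a b).mul_right a |>.trans (by rw [sq]))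
            ((Int.gcd_dvd_right a b).mul_right b |>.trans (by rw [sq]))
        rw [hsum] at h1
        exact_mod_cast h1
      rw [hco] at hdvd
      have := Int.le_of_dvd one_pos hdvd
      omega
    have hprod : jacobiSym a N * jacobiSym a M = 1 := by
      rw [← jacobiSym.mul_right' a hN0 hM0]
      -- J(a | N*M) = 1
      have hchi : ZMod.χ₄ (N*M : ℕ) = 1 := ZMod.χ₄_nat_one_mod_four hNM4
      have habs : jacobiSym a (N*M) = jacobiSym (a.natAbs : ℤ) (N*M) := by
        rcases Int.natAbs_eq a with h | h
        · rw [← h]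
        · conv_lhs => rw [h]
          rw [jacobiSym.neg _ hNModd, hchi, one_mul]
      rw [habs]
      have hQR := jacobiSym.quadratic_reciprocity_one_mod_four' (a := a.natAbs) (b := N*M)
        (Int.natAbs_odd.mpr haodd) hNM4
      rw [hQR]
      have hmod : ((N*M : ℕ) : ℤ) % (a.natAbs : ℕ) = (b^2) % (a.natAbs : ℕ) := by
        have hd : ((a.natAbs : ℕ) : ℤ) ∣ b^2 - ((N*M : ℕ) : ℤ) := by
          have h1 : ((a.natAbs : ℕ) : ℤ) ∣ a^2 := dvd_pow (Int.natAbs_dvd.mpr dvd_rfl) two_ne_zero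
          have he : b^2 - ((N*M : ℕ) : ℤ) = -(a^2) := by push_cast; linarith [hsum]
          rw [he]
          exact dvd_neg.mpr h1
        exact Int.modEq_iff_dvd.mpr hd
      rw [jacobiSym.mod_left' hmod]
      apply jacobiSym.sq_one'
      have : Int.gcd b ((a.natAbs : ℕ) : ℤ) = Int.gcd a b := by
        rw [Int.gcd_comm]; simp [Int.gcd, Int.natAbs_abs]
      rw [this, hcoab]
    have h1 := jacobiSym.eq_one_or_neg_one (a := a) (b := N) (by exact_mod_cast hcoN)
    have h2 := jacobiSym.eq_one_or_neg_one (a := a) (b := M) (by exact_mod_cast hcoM)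
    rcases h1 with h1 | h1 <;> rcases h2 with h2 | h2 <;> rw [h1, h2] at hprod ⊢ <;> omega
  · -- non-coprime case: both symbols are 0
    set g := Int.gcd a ((N*M : ℕ) : ℤ) with hgdef
    have hgne : g ≠ 0 := fun h => ha0 (Int.gcd_eq_zero_iff.mp h).1
    set p := g.minFac with hpdef
    have hp : p.Prime := Nat.minFac_prime hco
    have hpa : (p:ℤ) ∣ a :=
      dvd_trans (Int.natCast_dvd_natCast.mpr (Nat.minFac_dvd g)) (Int.gcd_dvd_left a ((N*M : ℕ) : ℤ))
    have hpNM : p ∣ N*M := by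
      have h1 : g ∣ N*M := by
        have := Int.gcd_dvd_right (a := a) (b := ((N*M : ℕ) : ℤ))
        exact_mod_cast this
      exact (Nat.minFac_dvd g).trans h1
    have hpa' : (p:ℤ) ∣ r*r' - s*s' := hare ▸ hpa
    have hboth : (p:ℤ) ∣ (N:ℤ) ∧ (p:ℤ) ∣ (M:ℤ) := by
      rcases hp.dvd_mul.mp hpNM with h | h
      · have hpN : (p:ℤ) ∣ (N:ℤ) := Int.natCast_dvd_natCast.mpr h
        refine ⟨hpN, ?_⟩
        rw [hMZ]
        exact aux14 hp hwprim hpa' (hNZ ▸ hpN)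
      · have hpM : (p:ℤ) ∣ (M:ℤ) := Int.natCast_dvd_natCast.mpr h
        refine ⟨?_, hpM⟩
        rw [hNZ]
        exact aux14 hp hzprim (by rw [show r'*r - s'*s = r*r' - s*s' by ring]; exact hpa')
          (hMZ ▸ hpM)
    have hzeroN : jacobiSym a N = 0 := by
      rw [jacobiSym.eq_zero_iff]
      refine ⟨hN0, fun h => ?_⟩
      have : (p:ℤ) ∣ (Int.gcd a (N:ℤ) : ℤ) := Int.dvd_coe_gcd hpa hboth.1
      rw [h] at this
      have := Int.le_of_dvd one_pos this
      have := hp.two_le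
      omega
    have hzeroM : jacobiSym a M = 0 := by
      rw [jacobiSym.eq_zero_iff]
      refine ⟨hM0, fun h => ?_⟩
      have : (p:ℤ) ∣ (Int.gcd a (M:ℤ) : ℤ) := Int.dvd_coe_gcd hpa hboth.2
      rw [h] at this
      have := Int.le_of_dvd one_pos this
      have := hp.two_le
      omega
    rw [hzeroN, hzeroM]
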